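/- Let G be a group acting on a set X, let s₁, s₂ ∈ G, set s₀ := s₁ * s₂, and assume s₀² = 1, s₀ ≠ 1, s₁² ≠ 1, s₂² ≠ 1 and that the cyclic subgroups ⟨s₀⟩, ⟨s₁⟩, ⟨s₂⟩ intersect pairwise trivially. Let v ∈ X have trivial stabilizer, and define e₀, e₁, e₂ and F₂⁰ := {e₀, e₁, s₁ • e₂}, F₂¹ := {s₁ᵏ • e₁ : k ∈ ℤ}, F₂² := {s₂ᵏ • e₂ : k ∈ ℤ}. Call a set F of subsets of X a face if F = g • F₂^i for some g ∈ G and i ∈ {0,1,2}. Then: (a) the faces containing e₀ as an element are exactly F₂⁰ and s₀ • F₂⁰, and these are distinct; (b) the faces containing e₁ are exactly F₂¹ and F₂⁰, and these are distinct; (c) the faces containing e₂ are exactly F₂² and s₁⁻¹ • F₂⁰, and these are distinct. In particular each base edge of the snub S_P(v) lies in exactly two faces. -/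

import Mathlib

open Pointwise

/-- The base edges of the snub: `e₀ = {v, (s₁s₂)•v}`, `e₁ = {v, s₁•v}`, `e₂ = {v, s₂•v}`. -/
def snubBaseEdge {G X : Type*} [Group G] [MulAction G X] (s₁ s₂ : G) (v : X) :
    Fin 3 → Set X :=
  ![{v, (s₁ * s₂) • v}, {v, s₁ • v}, {v, s₂ • v}]

/-- The base faces of the snub: `F₂⁰ = {e₀, e₁, s₁ • e₂}`, `F₂¹ = {s₁ᵏ • e₁ : k ∈ ℤ}`,
`F₂² = {s₂ᵏ • e₂ : k ∈ ℤ}`. -/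
def snubBaseFace {G X : Type*} [Group G] [MulAction G X] (s₁ s₂ : G) (v : X) :
    Fin 3 → Set (Set X) :=
  ![{snubBaseEdge s₁ s₂ v 0, snubBaseEdge s₁ s₂ v 1, s₁ • snubBaseEdge s₁ s₂ v 2},
    {E | ∃ k : ℤ, E = s₁ ^ k • snubBaseEdge s₁ s₂ v 1},
    {E | ∃ k : ℤ, E = s₂ ^ k • snubBaseEdge s₁ s₂ v 2}]

section SnubAux

variable {G X : Type*} [Group G] [MulAction G X]

def vpair (v : X) (a b : G) : Set X := {a • v, b • v}

lemma smul_vpair (v : X) (g a b : G) : g • vpair v a b = vpair v (g * a) (g * b) := by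
  simp [vpair, Set.smul_set_insert, Set.smul_set_singleton, mul_smul]

lemma vpair_eq {v : X} (hv : ∀ g : G, g • v = v → g = 1) (a b c d : G) :
    vpair v a b = vpair v c d ↔ (a = c ∧ b = d) ∨ (a = d ∧ b = c) := by
  have key : ∀ p q : G, p • v = q • v ↔ p = q := by
    intro p q
    constructor
    · intro h
      have h2 : (q⁻¹ * p) • v = v := by rw [mul_smul, h, inv_smul_smul]
      exact (inv_mul_eq_one.mp (hv _ h2)).symm
    · rintro rfl; rfl
  unfold vpair
  rw [Set.pair_eq_pair_iff]
  simp only [key]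

lemma edge0 (s₁ s₂ : G) (v : X) : snubBaseEdge s₁ s₂ v 0 = vpair v 1 (s₁ * s₂) := by
  simp [snubBaseEdge, vpair]

lemma edge1 (s₁ s₂ : G) (v : X) : snubBaseEdge s₁ s₂ v 1 = vpair v 1 s₁ := by
  simp [snubBaseEdge, vpair]

lemma edge2 (s₁ s₂ : G) (v : X) : snubBaseEdge s₁ s₂ v 2 = vpair v 1 s₂ := by
  simp [snubBaseEdge, vpair]

lemma face0 (s₁ s₂ : G) (v : X) : snubBaseFace s₁ s₂ v 0 =
    {vpair v 1 (s₁ * s₂), vpair v 1 s₁, vpair v s₁ (s₁ * s₂)} := by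
  have : s₁ • snubBaseEdge s₁ s₂ v 2 = vpair v s₁ (s₁ * s₂) := by
    rw [edge2, smul_vpair, mul_one]
  simp only [snubBaseFace, Matrix.cons_val_zero, edge0, edge1, this]

lemma face1 (s₁ s₂ : G) (v : X) : snubBaseFace s₁ s₂ v 1 =
    {E | ∃ k : ℤ, E = vpair v (s₁ ^ k) (s₁ ^ (k + 1))} := by
  have : ∀ k : ℤ, s₁ ^ k • snubBaseEdge s₁ s₂ v 1 = vpair v (s₁ ^ k) (s₁ ^ (k + 1)) := by
    intro k; rw [edge1, smul_vpair, mul_one, ← zpow_add_one]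
  simp only [snubBaseFace, Matrix.cons_val_one, Matrix.head_cons, this]
  rfl

lemma face2 (s₁ s₂ : G) (v : X) : snubBaseFace s₁ s₂ v 2 =
    {E | ∃ k : ℤ, E = vpair v (s₂ ^ k) (s₂ ^ (k + 1))} := by
  have : ∀ k : ℤ, s₂ ^ k • snubBaseEdge s₁ s₂ v 2 = vpair v (s₂ ^ k) (s₂ ^ (k + 1)) := by
    intro k; rw [edge2, smul_vpair, mul_one, ← zpow_add_one]
  simp only [snubBaseFace]
  norm_num [this]
  rfl

lemma mem_smul_face0 (s₁ s₂ : G) (v : X) (g : G) (E : Set X) :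
    E ∈ g • snubBaseFace s₁ s₂ v 0 ↔
      E = vpair v g (g * (s₁ * s₂)) ∨ E = vpair v g (g * s₁) ∨
        E = vpair v (g * s₁) (g * (s₁ * s₂)) := by
  rw [face0]
  simp [Set.smul_set_insert, Set.smul_set_singleton, smul_vpair, mul_one]

lemma mem_smul_face1 (s₁ s₂ : G) (v : X) (g : G) (E : Set X) :
    E ∈ g • snubBaseFace s₁ s₂ v 1 ↔
      ∃ k : ℤ, E = vpair v (g * s₁ ^ k) (g * s₁ ^ (k + 1)) := by
  rw [face1, Set.mem_smul_set]
  constructor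
  · rintro ⟨A, ⟨k, rfl⟩, rfl⟩; exact ⟨k, by rw [smul_vpair]⟩
  · rintro ⟨k, rfl⟩
    exact ⟨vpair v (s₁ ^ k) (s₁ ^ (k + 1)), ⟨k, rfl⟩, (smul_vpair v g _ _)⟩

lemma mem_smul_face2 (s₁ s₂ : G) (v : X) (g : G) (E : Set X) :
    E ∈ g • snubBaseFace s₁ s₂ v 2 ↔
      ∃ k : ℤ, E = vpair v (g * s₂ ^ k) (g * s₂ ^ (k + 1)) := by
  rw [face2, Set.mem_smul_set]
  constructor
  · rintro ⟨A, ⟨k, rfl⟩, rfl⟩; exact ⟨k, by rw [smul_vpair]⟩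
  · rintro ⟨k, rfl⟩
    exact ⟨vpair v (s₂ ^ k) (s₂ ^ (k + 1)), ⟨k, rfl⟩, (smul_vpair v g _ _)⟩

lemma zpow_smul_face1 (s₁ s₂ : G) (v : X) (k : ℤ) :
    s₁ ^ k • snubBaseFace s₁ s₂ v 1 = snubBaseFace s₁ s₂ v 1 := by
  ext E
  rw [mem_smul_face1, face1, Set.mem_setOf_eq]
  constructor
  · rintro ⟨j, rfl⟩
    exact ⟨k + j, by rw [← zpow_add, ← zpow_add, ← add_assoc]⟩
  · rintro ⟨m, rfl⟩
    refine ⟨m - k, ?_⟩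
    have e1 : k + (m - k) = m := by ring
    have e2 : k + (m - k + 1) = m + 1 := by ring
    rw [← zpow_add, ← zpow_add, e1, e2]

lemma zpow_smul_face2 (s₁ s₂ : G) (v : X) (k : ℤ) :
    s₂ ^ k • snubBaseFace s₁ s₂ v 2 = snubBaseFace s₁ s₂ v 2 := by
  ext E
  rw [mem_smul_face2, face2, Set.mem_setOf_eq]
  constructor
  · rintro ⟨j, rfl⟩
    exact ⟨k + j, by rw [← zpow_add, ← zpow_add, ← add_assoc]⟩
  · rintro ⟨m, rfl⟩
    refine ⟨m - k, ?_⟩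
    have e1 : k + (m - k) = m := by ring
    have e2 : k + (m - k + 1) = m + 1 := by ring
    rw [← zpow_add, ← zpow_add, e1, e2]

lemma zpow_cancel₁ (a : G) (k : ℤ) : (a ^ k)⁻¹ * a ^ (k + 1) = a := by
  rw [← zpow_neg, ← zpow_add]
  have : -k + (k + 1) = 1 := by ring
  rw [this, zpow_one]

lemma zpow_cancel₂ (a : G) (k : ℤ) : (a ^ (k + 1))⁻¹ * a ^ k = a⁻¹ := by
  rw [← zpow_neg, ← zpow_add]
  have : -(k + 1) + k = -1 := by ring
  rw [this, zpow_neg_one]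

end SnubAux

/-- Each base edge of the snub lies in exactly two faces: the faces containing `e₀` are
exactly `F₂⁰` and `s₀ • F₂⁰`; the faces containing `e₁` are exactly `F₂¹` and `F₂⁰`; and the
faces containing `e₂` are exactly `F₂²` and `s₁⁻¹ • F₂⁰`; in each case the two faces are
distinct. -/
theorem snub_base_edge_in_exactly_two_faces {G X : Type*} [Group G] [MulAction G X]
    (s₁ s₂ : G) (h0 : (s₁ * s₂) ^ 2 = 1) (hs0 : s₁ * s₂ ≠ 1)
    (h1 : s₁ ^ 2 ≠ 1) (h2 : s₂ ^ 2 ≠ 1)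
    (h01 : Subgroup.zpowers (s₁ * s₂) ⊓ Subgroup.zpowers s₁ = ⊥)
    (h02 : Subgroup.zpowers (s₁ * s₂) ⊓ Subgroup.zpowers s₂ = ⊥)
    (h12 : Subgroup.zpowers s₁ ⊓ Subgroup.zpowers s₂ = ⊥)
    (v : X) (hv : ∀ g : G, g • v = v → g = 1) :
    ({F : Set (Set X) | (∃ g : G, ∃ i : Fin 3, F = g • snubBaseFace s₁ s₂ v i) ∧
        snubBaseEdge s₁ s₂ v 0 ∈ F} =
      {snubBaseFace s₁ s₂ v 0, (s₁ * s₂) • snubBaseFace s₁ s₂ v 0} ∧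
      snubBaseFace s₁ s₂ v 0 ≠ (s₁ * s₂) • snubBaseFace s₁ s₂ v 0) ∧
    ({F : Set (Set X) | (∃ g : G, ∃ i : Fin 3, F = g • snubBaseFace s₁ s₂ v i) ∧
        snubBaseEdge s₁ s₂ v 1 ∈ F} =
      {snubBaseFace s₁ s₂ v 1, snubBaseFace s₁ s₂ v 0} ∧
      snubBaseFace s₁ s₂ v 1 ≠ snubBaseFace s₁ s₂ v 0) ∧
    ({F : Set (Set X) | (∃ g : G, ∃ i : Fin 3, F = g • snubBaseFace s₁ s₂ v i) ∧
        snubBaseEdge s₁ s₂ v 2 ∈ F} =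
      {snubBaseFace s₁ s₂ v 2, s₁⁻¹ • snubBaseFace s₁ s₂ v 0} ∧
      snubBaseFace s₁ s₂ v 2 ≠ s₁⁻¹ • snubBaseFace s₁ s₂ v 0) := by
  -- basic consequences of the hypotheses
  have hm : (s₁ * s₂) * (s₁ * s₂) = 1 := by rw [← sq]; exact h0
  have hinv : (s₁ * s₂)⁻¹ = s₁ * s₂ := inv_eq_of_mul_eq_one_right hm
  have hs1 : s₁ ≠ 1 := by intro h; exact h1 (by rw [h, one_pow])
  have hs2 : s₂ ≠ 1 := by intro h; exact h2 (by rw [h, one_pow])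
  have h1' : s₁ * s₁ ≠ 1 := by rw [← sq]; exact h1
  have h2' : s₂ * s₂ ≠ 1 := by rw [← sq]; exact h2
  have bot_of : ∀ {a b : G}, Subgroup.zpowers a ⊓ Subgroup.zpowers b = ⊥ →
      ∀ x : G, x ∈ Subgroup.zpowers a → x ∈ Subgroup.zpowers b → x = 1 := by
    intro a b hab x hxa hxb
    have hx : x ∈ Subgroup.zpowers a ⊓ Subgroup.zpowers b := ⟨hxa, hxb⟩
    rw [hab] at hx
    exact Subgroup.mem_bot.mp hx
  have A1 : s₁ * s₂ ≠ s₁ := fun h => hs0 (bot_of h01 _ (Subgroup.mem_zpowers _)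
    (by rw [h]; exact Subgroup.mem_zpowers _))
  have A2 : s₁ * s₂ ≠ s₁⁻¹ := fun h => hs0 (bot_of h01 _ (Subgroup.mem_zpowers _)
    (by rw [h]; exact Subgroup.inv_mem _ (Subgroup.mem_zpowers _)))
  have A3 : s₁ * s₂ ≠ s₂ := fun h => hs0 (bot_of h02 _ (Subgroup.mem_zpowers _)
    (by rw [h]; exact Subgroup.mem_zpowers _))
  have A4 : s₁ * s₂ ≠ s₂⁻¹ := fun h => hs0 (bot_of h02 _ (Subgroup.mem_zpowers _)
    (by rw [h]; exact Subgroup.inv_mem _ (Subgroup.mem_zpowers _)))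
  have A5 : s₁ ≠ s₂ := fun h => hs1 (bot_of h12 _ (Subgroup.mem_zpowers _)
    (by rw [h]; exact Subgroup.mem_zpowers _))
  have A6 : s₁ ≠ s₂⁻¹ := fun h => hs1 (bot_of h12 _ (Subgroup.mem_zpowers _)
    (by rw [h]; exact Subgroup.inv_mem _ (Subgroup.mem_zpowers _)))
  have VP := fun a b c d => vpair_eq (v := v) hv a b c d
  refine ⟨⟨?_, ?_⟩, ⟨?_, ?_⟩, ⟨?_, ?_⟩⟩
  -- ===== (a) first set equality: faces containing e₀ =====
  · ext F
    simp only [Set.mem_setOf_eq, Set.mem_insert_iff, Set.mem_singleton_iff]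
    constructor
    · rintro ⟨⟨g, i, rfl⟩, hmem⟩
      fin_cases i <;>
        simp only [Fin.zero_eta, Fin.mk_one, Fin.reduceFinMk] at hmem ⊢
      · rw [edge0, mem_smul_face0] at hmem
        rcases hmem with h | h | h
        · rcases (VP _ _ _ _).mp h with ⟨hga, -⟩ | ⟨-, hgb⟩
          · left; rw [← hga, one_smul]
          · right; rw [← hgb]
        · rcases (VP _ _ _ _).mp h with ⟨hga, hgb⟩ | ⟨hga, hgb⟩
          · rw [← hga, one_mul] at hgb; exact absurd hgb A1
          · have hg := eq_inv_of_mul_eq_one_left hga.symm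
            rw [hg] at hgb; exact absurd hgb A2
        · rcases (VP _ _ _ _).mp h with ⟨hga, hgb⟩ | ⟨hga, hgb⟩
          · have hg : g = 1 := right_eq_mul.mp hgb
            rw [hg, one_mul] at hga; exact absurd hga.symm hs1
          · have hg := eq_inv_of_mul_eq_one_left hga.symm
            rw [hg, hinv] at hgb
            exact absurd (left_eq_mul.mp hgb) hs1
      · rw [edge0, mem_smul_face1] at hmem
        obtain ⟨k, hk⟩ := hmem
        rcases (VP _ _ _ _).mp hk with ⟨hga, hgb⟩ | ⟨hga, hgb⟩
        · have hg := eq_inv_of_mul_eq_one_left hga.symm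
          rw [hg, zpow_cancel₁] at hgb; exact absurd hgb A1
        · have hg := eq_inv_of_mul_eq_one_left hga.symm
          rw [hg, zpow_cancel₂] at hgb; exact absurd hgb A2
      · rw [edge0, mem_smul_face2] at hmem
        obtain ⟨k, hk⟩ := hmem
        rcases (VP _ _ _ _).mp hk with ⟨hga, hgb⟩ | ⟨hga, hgb⟩
        · have hg := eq_inv_of_mul_eq_one_left hga.symm
          rw [hg, zpow_cancel₁] at hgb; exact absurd hgb A3
        · have hg := eq_inv_of_mul_eq_one_left hga.symm
          rw [hg, zpow_cancel₂] at hgb; exact absurd hgb A4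
    · rintro (rfl | rfl)
      · exact ⟨⟨1, 0, (one_smul _ _).symm⟩,
          by rw [face0, edge0]; exact Set.mem_insert _ _⟩
      · refine ⟨⟨s₁ * s₂, 0, rfl⟩, ?_⟩
        rw [edge0, mem_smul_face0]
        exact Or.inl ((VP _ _ _ _).mpr (Or.inr ⟨hm.symm, rfl⟩))
  -- ===== (a) distinctness =====
  · intro h
    have hmem : vpair v (s₁ * s₂) ((s₁ * s₂) * s₁) ∈ snubBaseFace s₁ s₂ v 0 := by
      rw [h, mem_smul_face0]; exact Or.inr (Or.inl rfl)
    rw [face0] at hmem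
    rcases hmem with h' | h' | h'
    · rcases (VP _ _ _ _).mp h' with ⟨hga, -⟩ | ⟨-, hgb⟩
      · exact hs0 hga
      · exact A2 (eq_inv_of_mul_eq_one_left hgb)
    · rcases (VP _ _ _ _).mp h' with ⟨hga, -⟩ | ⟨hga, -⟩
      · exact hs0 hga
      · exact A1 hga
    · rcases (VP _ _ _ _).mp h' with ⟨hga, -⟩ | ⟨-, hgb⟩
      · exact A1 hga
      · exact hs0 (mul_eq_right.mp hgb)
  -- ===== (b) second set equality: faces containing e₁ =====
  · ext F
    simp only [Set.mem_setOf_eq, Set.mem_insert_iff, Set.mem_singleton_iff]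
    constructor
    · rintro ⟨⟨g, i, rfl⟩, hmem⟩
      fin_cases i <;>
        simp only [Fin.zero_eta, Fin.mk_one, Fin.reduceFinMk] at hmem ⊢
      · rw [edge1, mem_smul_face0] at hmem
        rcases hmem with h | h | h
        · rcases (VP _ _ _ _).mp h with ⟨hga, hgb⟩ | ⟨hga, hgb⟩
          · rw [← hga, one_mul] at hgb; exact absurd hgb.symm A1
          · rw [← hgb] at hga
            exact absurd (eq_inv_of_mul_eq_one_right hga.symm) A2
        · rcases (VP _ _ _ _).mp h with ⟨hga, -⟩ | ⟨hga, hgb⟩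
          · right; rw [← hga, one_smul]
          · rw [← hgb] at hga; exact absurd hga.symm h1'
        · rcases (VP _ _ _ _).mp h with ⟨hga, hgb⟩ | ⟨hga, hgb⟩
          · have hg := eq_inv_of_mul_eq_one_left hga.symm
            rw [hg, inv_mul_cancel_left] at hgb; exact absurd hgb A5
          · have hg : g = 1 := right_eq_mul.mp hgb
            rw [hg, one_mul] at hga; exact absurd hga.symm hs0
      · rw [edge1, mem_smul_face1] at hmem
        obtain ⟨k, hk⟩ := hmem
        rcases (VP _ _ _ _).mp hk with ⟨hga, -⟩ | ⟨hga, hgb⟩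
        · left
          have hg := eq_inv_of_mul_eq_one_left hga.symm
          rw [hg, ← zpow_neg]
          exact zpow_smul_face1 s₁ s₂ v (-k)
        · have hg := eq_inv_of_mul_eq_one_left hga.symm
          rw [hg, zpow_cancel₂] at hgb
          exact absurd (inv_eq_iff_mul_eq_one.mp hgb.symm) h1'
      · rw [edge1, mem_smul_face2] at hmem
        obtain ⟨k, hk⟩ := hmem
        rcases (VP _ _ _ _).mp hk with ⟨hga, hgb⟩ | ⟨hga, hgb⟩
        · have hg := eq_inv_of_mul_eq_one_left hga.symm
          rw [hg, zpow_cancel₁] at hgb; exact absurd hgb A5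
        · have hg := eq_inv_of_mul_eq_one_left hga.symm
          rw [hg, zpow_cancel₂] at hgb; exact absurd hgb A6
    · rintro (rfl | rfl)
      · refine ⟨⟨1, 1, (one_smul _ _).symm⟩, ?_⟩
        rw [face1, edge1]
        exact ⟨0, by rw [zpow_zero, zero_add, zpow_one]⟩
      · exact ⟨⟨1, 0, (one_smul _ _).symm⟩,
          by rw [face0, edge1]; exact Set.mem_insert_iff.mpr (Or.inr (Set.mem_insert _ _))⟩
  -- ===== (b) distinctness =====
  · intro h
    have hmem : vpair v s₁⁻¹ 1 ∈ snubBaseFace s₁ s₂ v 1 := by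
      rw [face1]
      exact ⟨-1, by rw [zpow_neg_one, neg_add_cancel, zpow_zero]⟩
    rw [h, face0] at hmem
    rcases hmem with h' | h' | h'
    · rcases (VP _ _ _ _).mp h' with ⟨hga, -⟩ | ⟨hga, -⟩
      · exact hs1 (inv_eq_one.mp hga)
      · exact A2 hga.symm
    · rcases (VP _ _ _ _).mp h' with ⟨hga, -⟩ | ⟨hga, -⟩
      · exact hs1 (inv_eq_one.mp hga)
      · exact h1' (inv_eq_iff_mul_eq_one.mp hga)
    · rcases (VP _ _ _ _).mp h' with ⟨hga, -⟩ | ⟨-, hgb⟩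
      · exact h1' (inv_eq_iff_mul_eq_one.mp hga)
      · exact hs1 hgb.symm
  -- ===== (c) third set equality: faces containing e₂ =====
  · ext F
    simp only [Set.mem_setOf_eq, Set.mem_insert_iff, Set.mem_singleton_iff]
    constructor
    · rintro ⟨⟨g, i, rfl⟩, hmem⟩
      fin_cases i <;>
        simp only [Fin.zero_eta, Fin.mk_one, Fin.reduceFinMk] at hmem ⊢
      · rw [edge2, mem_smul_face0] at hmem
        rcases hmem with h | h | h
        · rcases (VP _ _ _ _).mp h with ⟨hga, hgb⟩ | ⟨hga, hgb⟩
          · rw [← hga, one_mul] at hgb; exact absurd hgb.symm A3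
          · rw [← hgb] at hga
            exact absurd (eq_inv_of_mul_eq_one_right hga.symm) A4
        · rcases (VP _ _ _ _).mp h with ⟨hga, hgb⟩ | ⟨hga, hgb⟩
          · rw [← hga, one_mul] at hgb; exact absurd hgb.symm A5
          · rw [← hgb] at hga
            exact absurd (eq_inv_of_mul_eq_one_right hga.symm) A6
        · rcases (VP _ _ _ _).mp h with ⟨hga, hgb⟩ | ⟨hga, hgb⟩
          · right
            have hg := eq_inv_of_mul_eq_one_left hga.symm
            rw [hg]
          · have hg := eq_inv_of_mul_eq_one_left hga.symm
            rw [hg, hinv] at hgb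
            have key : ((s₁ * s₂) * s₁) * s₂ = 1 := by rw [mul_assoc]; exact hm
            rw [← hgb] at key
            exact absurd key h2'
      · rw [edge2, mem_smul_face1] at hmem
        obtain ⟨k, hk⟩ := hmem
        rcases (VP _ _ _ _).mp hk with ⟨hga, hgb⟩ | ⟨hga, hgb⟩
        · have hg := eq_inv_of_mul_eq_one_left hga.symm
          rw [hg, zpow_cancel₁] at hgb; exact absurd hgb.symm A5
        · have hg := eq_inv_of_mul_eq_one_left hga.symm
          rw [hg, zpow_cancel₂] at hgb
          exact absurd (inv_eq_iff_mul_eq_one.mp hgb.symm) hs0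
      · rw [edge2, mem_smul_face2] at hmem
        obtain ⟨k, hk⟩ := hmem
        rcases (VP _ _ _ _).mp hk with ⟨hga, -⟩ | ⟨hga, hgb⟩
        · left
          have hg := eq_inv_of_mul_eq_one_left hga.symm
          rw [hg, ← zpow_neg]
          exact zpow_smul_face2 s₁ s₂ v (-k)
        · have hg := eq_inv_of_mul_eq_one_left hga.symm
          rw [hg, zpow_cancel₂] at hgb
          exact absurd (inv_eq_iff_mul_eq_one.mp hgb.symm) h2'
    · rintro (rfl | rfl)
      · refine ⟨⟨1, 2, (one_smul _ _).symm⟩, ?_⟩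
        rw [face2, edge2]
        exact ⟨0, by rw [zpow_zero, zero_add, zpow_one]⟩
      · refine ⟨⟨s₁⁻¹, 0, rfl⟩, ?_⟩
        rw [edge2, mem_smul_face0]
        exact Or.inr (Or.inr ((VP _ _ _ _).mpr
          (Or.inl ⟨(inv_mul_cancel s₁).symm, (inv_mul_cancel_left s₁ s₂).symm⟩)))
  -- ===== (c) distinctness =====
  · intro h
    have hmem : vpair v s₂⁻¹ 1 ∈ snubBaseFace s₁ s₂ v 2 := by
      rw [face2]
      exact ⟨-1, by rw [zpow_neg_one, neg_add_cancel, zpow_zero]⟩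
    rw [h, mem_smul_face0] at hmem
    simp only [inv_mul_cancel_left, inv_mul_cancel] at hmem
    rcases hmem with h' | h' | h'
    · rcases (VP _ _ _ _).mp h' with ⟨-, hgb⟩ | ⟨hga, -⟩
      · exact hs2 hgb.symm
      · exact h2' (inv_eq_iff_mul_eq_one.mp hga)
    · rcases (VP _ _ _ _).mp h' with ⟨hga, -⟩ | ⟨hga, -⟩
      · exact A5 (inv_injective hga).symm
      · exact hs2 (inv_eq_one.mp hga)
    · rcases (VP _ _ _ _).mp h' with ⟨hga, -⟩ | ⟨hga, -⟩
      · exact hs2 (inv_eq_one.mp hga)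
      · exact h2' (inv_eq_iff_mul_eq_one.mp hga)
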